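/- For all holomorphic tangent vector fields Z, W on M one has g([Z, W̄], T) = −2 i h(Z, W̄), where [Z,W̄] is the Lie bracket (computed via smooth extensions) and h is the complex-bilinear extension of the second fundamental form. In other words, the Levi form L_η(Z,W̄) = (1/2i) dη(Z,W̄) associated with the 1-form η(·) = g(·, T) coincides with h(Z,W̄). -/

import Mathlib

noncomputable section
open scoped BigOperators

/-- `ℂ^{n+1}`, identified with `ℝ^{2n+2}` via its real structure. -/
abbrev E (n : ℕ) : Type := EuclideanSpace ℂ (Fin (n + 1))

/-- The standard complex structure: multiplication by `i`. -/
def J {n : ℕ} (v : E n) : E n := Complex.I • v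

/-- The real inner product `⟨x, y⟩ = Re ⟪x, y⟫`. -/
def rI {n : ℕ} (x y : E n) : ℝ := (inner ℂ x y : ℂ).re

/-- The (real) tangent space at `p` of a hypersurface with unit normal `ν`. -/
def tangAt {n : ℕ} (ν : E n → E n) (p : E n) : Set (E n) := {X | rI (ν p) X = 0}

/-- `M` is a smooth embedded real hypersurface of `ℂ^{n+1}` (locally a regular zero
set of a smooth real function), oriented by the smooth unit normal field `ν`
(extended smoothly to the ambient space). -/
def IsHypersurface {n : ℕ} (M : Set (E n)) (ν : E n → E n) : Prop :=
  ContDiff ℝ (⊤ : ℕ∞) ν ∧ (∀ p ∈ M, ‖ν p‖ = 1) ∧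
    ∀ p ∈ M, ∃ (V : Set (E n)) (F : E n → ℝ), IsOpen V ∧ p ∈ V ∧
      ContDiffOn ℝ (⊤ : ℕ∞) F V ∧ (M ∩ V = {z ∈ V | F z = 0}) ∧
      ∀ z ∈ M ∩ V, ∀ X : E n, (fderiv ℝ F z X = 0 ↔ X ∈ tangAt ν z)

/-- The horizontal (maximal complex) subspace `H_p = {X ∈ T_pM : JX ∈ T_pM}`. -/
def horizAt {n : ℕ} (ν : E n → E n) (p : E n) : Set (E n) :=
  {X | X ∈ tangAt ν p ∧ J X ∈ tangAt ν p}

/-- The second fundamental form `h(X,Y) = ⟨X, ∂_Y ν⟩`. -/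
def sff {n : ℕ} (ν : E n → E n) (p : E n) (X Y : E n) : ℝ :=
  rI X (fderiv ℝ ν p Y)

/-- The family `X_1, …, X_n, J X_1, …, J X_n`. -/
def combined {n : ℕ} (X : Fin n → E n) : (Fin n ⊕ Fin n) → E n :=
  Sum.elim X (fun α => J (X α))

/-- `{X_1, …, X_n, J X_1, …, J X_n}` is an orthonormal basis of the horizontal
space at `p` (w.r.t. the real inner product). -/
def IsHorizONB {n : ℕ} (ν : E n → E n) (p : E n) (X : Fin n → E n) : Prop :=
  (∀ α, X α ∈ horizAt ν p) ∧
  (∀ i j, rI (combined X i) (combined X j) = if i = j then 1 else 0) ∧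
  (∀ Y ∈ horizAt ν p, Y ∈ Submodule.span ℝ (Set.range (combined X)))

/-! ## Complexified tangent vectors
A complexified vector `X + iY` (the complexification unit `i` is distinct from
the complex structure `J`) is modelled as the pair `(X, Y)`. -/

/-- Complexified vectors of `ℂ^{n+1}`: `(X, Y)` stands for `X + iY`. -/
abbrev CV (n : ℕ) : Type := E n × E n

/-- Conjugation `X + iY ↦ X - iY`. -/
def conjCV {n : ℕ} (v : CV n) : CV n := (v.1, -v.2)

/-- Multiplication of a complexified vector by a complex scalar. -/
def csmul {n : ℕ} (c : ℂ) (v : CV n) : CV n :=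
  (c.re • v.1 - c.im • v.2, c.re • v.2 + c.im • v.1)

/-- `g`, the complex-bilinear extension of the real inner product. -/
def gC {n : ℕ} (v w : CV n) : ℂ :=
  ((rI v.1 w.1 - rI v.2 w.2 : ℝ) : ℂ) + ((rI v.1 w.2 + rI v.2 w.1 : ℝ) : ℂ) * Complex.I

/-- The flat connection `D` of `ℂ^{n+1}` (componentwise directional derivative),
complex-bilinearly extended: `DD V u p = D_u V (p)`. -/
def DD {n : ℕ} (V : E n → CV n) (u : CV n) (p : E n) : CV n :=
  (fderiv ℝ (fun z => (V z).1) p u.1 - fderiv ℝ (fun z => (V z).2) p u.2,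
   fderiv ℝ (fun z => (V z).1) p u.2 + fderiv ℝ (fun z => (V z).2) p u.1)

/-- The Lie bracket `[U,V]` of complexified fields (for the flat ambient space
it is `D_U V - D_V U`). -/
def bracket {n : ℕ} (U V : E n → CV n) (p : E n) : CV n :=
  DD V (U p) p - DD U (V p) p

/-- Derivative `U f` of a complex function along a complexified vector. -/
def dC {n : ℕ} (f : E n → ℂ) (u : CV n) (p : E n) : ℂ :=
  (fderiv ℝ f p u.1) + Complex.I * (fderiv ℝ f p u.2)

/-- The field `T = J(ν)`, viewed as a complexified field. -/
def TF {n : ℕ} (ν : E n → E n) (z : E n) : CV n := (J (ν z), 0)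

/-- The holomorphic unit normal `N = (ν - iT)/√2`. -/
def NF {n : ℕ} (ν : E n → E n) (z : E n) : CV n :=
  ((Real.sqrt 2)⁻¹ • ν z, -((Real.sqrt 2)⁻¹ • J (ν z)))

/-- The complex-bilinear extension of the second fundamental form:
`h(Z, W) = g(Z, D_W ν)`. -/
def hC {n : ℕ} (ν : E n → E n) (p : E n) (v w : CV n) : ℂ :=
  gC v (fderiv ℝ ν p w.1, fderiv ℝ ν p w.2)

/-- Conjugate of a complexified field. -/
def conjF {n : ℕ} (V : E n → CV n) : E n → CV n := fun z => conjCV (V z)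

/-- A holomorphic tangent field `Z = X - iJX`, with `X` a smooth real field
satisfying `⟪X, ν⟫ = 0` (hermitian orthogonality) at every point of `M`. -/
def IsHoloField {n : ℕ} (M : Set (E n)) (ν : E n → E n) (Z : E n → CV n) : Prop :=
  ContDiff ℝ (⊤ : ℕ∞) (fun z => (Z z).1) ∧
  (∀ z, (Z z).2 = -J ((Z z).1)) ∧
  ∀ p ∈ M, (inner ℂ (ν p) ((Z p).1) : ℂ) = 0

/-- A complexified tangent field: a smooth field whose value at every point of
`M` lies in the complexified tangent space `ℂ T_p M`. -/
def IsCTField {n : ℕ} (M : Set (E n)) (ν : E n → E n) (V : E n → CV n) : Prop :=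
  ContDiff ℝ (⊤ : ℕ∞) (fun z => (V z).1) ∧ ContDiff ℝ (⊤ : ℕ∞) (fun z => (V z).2) ∧
  ∀ p ∈ M, rI (ν p) ((V p).1) = 0 ∧ rI (ν p) ((V p).2) = 0

/-- Projection of a real vector onto the real horizontal space (orthogonal
complement of `ν` and `T = Jν`). -/
def horR {n : ℕ} (ν : E n → E n) (z : E n) (x : E n) : E n :=
  x - rI (ν z) x • ν z - rI (J (ν z)) x • J (ν z)

/-- Projection `Π_H` of a complexified tangent vector onto the holomorphic bundle. -/
def PiH {n : ℕ} (ν : E n → E n) (z : E n) (v : CV n) : CV n :=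
  ((2 : ℝ)⁻¹ • (horR ν z v.1 + J (horR ν z v.2)),
   (2 : ℝ)⁻¹ • (horR ν z v.2 - J (horR ν z v.1)))

/-- Projection `Π_H̄` onto the antiholomorphic bundle. -/
def PiHb {n : ℕ} (ν : E n → E n) (z : E n) (v : CV n) : CV n :=
  ((2 : ℝ)⁻¹ • (horR ν z v.1 - J (horR ν z v.2)),
   (2 : ℝ)⁻¹ • (horR ν z v.2 + J (horR ν z v.1)))

/-- The connection `∇`: writing `V = Z + W̄ + fT` with `Z = Π_H V` holomorphic,
`W̄ = Π_H̄ V` antiholomorphic and `f = g(V, T)`, one sets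
`∇_u V = D_u Z - g(D_u Z, N̄) N + D_u W̄ - g(D_u W̄, N) N̄ + (u f) T`. -/
def nabla {n : ℕ} (ν : E n → E n) (V : E n → CV n) (u : CV n) (p : E n) : CV n :=
  (DD (fun z => PiH ν z (V z)) u p
      - csmul (gC (DD (fun z => PiH ν z (V z)) u p) (conjCV (NF ν p))) (NF ν p))
  + (DD (fun z => PiHb ν z (V z)) u p
      - csmul (gC (DD (fun z => PiHb ν z (V z)) u p) (NF ν p)) (conjCV (NF ν p)))
  + csmul (dC (fun z => gC (V z) (TF ν z)) u p) (TF ν p)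

/-- The torsion `Tor_∇(U,V) = ∇_U V - ∇_V U - [U,V]`. -/
def Tor {n : ℕ} (ν : E n → E n) (U V : E n → CV n) (p : E n) : CV n :=
  nabla ν V (U p) p - nabla ν U (V p) p - bracket U V p

/-- The covariant derivative of the second fundamental form:
`∇_Z h (U, W) = Z h(U,W) - h(∇_Z U, W) - h(U, ∇_Z W)`. -/
def nablaHform {n : ℕ} (ν : E n → E n) (Zf U W : E n → CV n) (p : E n) : ℂ :=
  dC (fun z => hC ν z (U z) (W z)) (Zf p) p
    - hC ν p (nabla ν U (Zf p) p) (W p) - hC ν p (U p) (nabla ν W (Zf p) p)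


/-! ## Auxiliary lemmas -/

section Aux

variable {n : ℕ}

lemma rI_real (x y : E n) : rI x y = @inner ℝ (E n) _ x y := by
  simp [rI, PiLp.inner_apply, RCLike.inner_apply, Complex.re_sum]

lemma rI_symm (x y : E n) : rI x y = rI y x := by
  rw [rI, rI, ← inner_conj_symm (𝕜 := ℂ) x y, Complex.conj_re]

lemma rI_J_J (x y : E n) : rI (J x) (J y) = rI x y := by
  simp [rI, J, inner_smul_left, inner_smul_right]

lemma rI_J_left (x y : E n) : rI (J x) y = - rI x (J y) := by
  simp [rI, J, inner_smul_left, inner_smul_right, Complex.mul_re]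

lemma rI_add_left (x y z : E n) : rI (x + y) z = rI x z + rI y z := by
  simp [rI_real, inner_add_left]

lemma rI_sub_left (x y z : E n) : rI (x - y) z = rI x z - rI y z := by
  simp [rI_real, inner_sub_left]

lemma rI_neg_left (x y : E n) : rI (-x) y = - rI x y := by
  simp [rI_real, inner_neg_left]

lemma rI_sub_right (x y z : E n) : rI x (y - z) = rI x y - rI x z := by
  simp [rI_real, inner_sub_right]

lemma rI_smul_right (r : ℝ) (x y : E n) : rI x (r • y) = r * rI x y := by
  simp only [rI_real]
  exact real_inner_smul_right x y r

lemma rI_zero_right (x : E n) : rI x 0 = 0 := by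
  simp [rI_real]

lemma rI_self_one {x : E n} (h : ‖x‖ = 1) : rI x x = 1 := by
  have h2 := inner_self_eq_norm_sq (𝕜 := ℂ) (x := x)
  rw [RCLike.re_to_complex] at h2
  rw [rI, h2, h]; norm_num

lemma diff_rI {A B : E n → E n} {p : E n} (hA : DifferentiableAt ℝ A p)
    (hB : DifferentiableAt ℝ B p) :
    DifferentiableAt ℝ (fun z => rI (A z) (B z)) p := by
  have hfun : (fun z => rI (A z) (B z)) = fun z => @inner ℝ (E n) _ (A z) (B z) :=
    funext fun z => rI_real _ _
  rw [hfun]; exact hA.inner ℝ hB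

lemma fderiv_rI {A B : E n → E n} {p : E n} (hA : DifferentiableAt ℝ A p)
    (hB : DifferentiableAt ℝ B p) (u : E n) :
    fderiv ℝ (fun z => rI (A z) (B z)) p u
      = rI (fderiv ℝ A p u) (B p) + rI (A p) (fderiv ℝ B p u) := by
  have hfun : (fun z => rI (A z) (B z)) = fun z => @inner ℝ (E n) _ (A z) (B z) :=
    funext fun z => rI_real _ _
  rw [hfun, fderiv_inner_apply ℝ hA hB, rI_real, rI_real]
  ring

/-- `J` as a continuous `ℝ`-linear map. -/
def JL (n : ℕ) : E n →L[ℝ] E n :=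
  (Complex.I • ContinuousLinearMap.id ℂ (E n)).restrictScalars ℝ

lemma JL_apply (v : E n) : JL n v = J v := rfl

lemma fderiv_J {X : E n → E n} {p : E n} (hX : DifferentiableAt ℝ X p) :
    fderiv ℝ (fun z => J (X z)) p = (JL n).comp (fderiv ℝ X p) :=
  ((JL n).hasFDerivAt.comp p hX.hasFDerivAt).fderiv

open Filter in
/-- The derivative of a function vanishing on `M` vanishes on tangent vectors. -/
lemma tangent_fderiv {M : Set (E n)} {ν : E n → E n}
    (hsurf : IsHypersurface M ν) {p : E n} (hp : p ∈ M)
    {f : E n → ℝ} (hf : DifferentiableAt ℝ f p)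
    (hf0 : ∀ᶠ z in nhds p, z ∈ M → f z = 0)
    {v : E n} (hv : v ∈ tangAt ν p) : fderiv ℝ f p v = 0 := by
  obtain ⟨hν, hnorm, hloc⟩ := hsurf
  obtain ⟨V, F, hVo, hpV, hFs, hMV, htan⟩ := hloc p hp
  have hpMV : p ∈ M ∩ V := ⟨hp, hpV⟩
  have hFp0 : F p = 0 := by
    have := hMV ▸ hpMV
    exact this.2
  have hFc : ContDiffAt ℝ (⊤ : ℕ∞) F p := hFs.contDiffAt (hVo.mem_nhds hpV)
  have hstrict : HasStrictFDerivAt F (fderiv ℝ F p) p :=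
    hFc.hasStrictFDerivAt (by simp)
  set F' := fderiv ℝ F p with hF'
  have hν1 : rI (ν p) (ν p) = 1 := rI_self_one (hnorm p hp)
  have hFν : F' (ν p) ≠ 0 := by
    intro h
    have h0 : rI (ν p) (ν p) = 0 := (htan p hpMV (ν p)).1 h
    rw [h0] at hν1; norm_num at hν1
  have hrange : LinearMap.range (F' : E n →ₗ[ℝ] ℝ) = ⊤ := by
    rw [LinearMap.range_eq_top]
    intro x
    exact ⟨(x / F' (ν p)) • ν p, by simp [div_mul_cancel₀, hFν]⟩
  set φ : ℝ → LinearMap.ker (F' : E n →ₗ[ℝ] ℝ) → E n := hstrict.implicitFunction F F' hrange with hφ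
  have hψ : HasStrictFDerivAt (φ (F p)) (LinearMap.ker (F' : E n →ₗ[ℝ] ℝ)).subtypeL 0 :=
    hstrict.to_implicitFunction hrange
  have hψ0 : φ (F p) 0 = p := hstrict.implicitFunction_apply_image hrange
  have hFeq : ∀ᶠ y : LinearMap.ker (F' : E n →ₗ[ℝ] ℝ) in nhds 0, F (φ (F p) y) = F p := by
    have h1 := hstrict.map_implicitFunction_eq hrange
    have h2 : Tendsto (fun y : LinearMap.ker (F' : E n →ₗ[ℝ] ℝ) => ((F p, y) : ℝ × LinearMap.ker (F' : E n →ₗ[ℝ] ℝ)))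
        (nhds 0) (nhds (F p, 0)) := ((continuous_const.prodMk continuous_id).tendsto 0)
    exact h2.eventually h1
  have hcont : ContinuousAt (φ (F p)) 0 := hψ.hasFDerivAt.continuousAt
  have hmemV : ∀ᶠ y : LinearMap.ker (F' : E n →ₗ[ℝ] ℝ) in nhds 0, φ (F p) y ∈ V := by
    have : ∀ᶠ x in nhds (φ (F p) 0), x ∈ V := by rw [hψ0]; exact hVo.mem_nhds hpV
    exact hcont.eventually this
  have hfz : ∀ᶠ y : LinearMap.ker (F' : E n →ₗ[ℝ] ℝ) in nhds 0, f (φ (F p) y) = 0 := by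
    have hfM : ∀ᶠ y : LinearMap.ker (F' : E n →ₗ[ℝ] ℝ) in nhds 0, φ (F p) y ∈ M → f (φ (F p) y) = 0 := by
      have : ∀ᶠ x in nhds (φ (F p) 0), x ∈ M → f x = 0 := by rw [hψ0]; exact hf0
      exact hcont.eventually this
    filter_upwards [hFeq, hmemV, hfM] with y h1 h2 h3
    apply h3
    have : φ (F p) y ∈ {z ∈ V | F z = 0} := ⟨h2, by rw [h1, hFp0]⟩
    rw [← hMV] at this
    exact this.1
  have hcomp : HasFDerivAt (fun y => f (φ (F p) y))
      ((fderiv ℝ f p).comp (LinearMap.ker (F' : E n →ₗ[ℝ] ℝ)).subtypeL) 0 := by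
    have h1 : HasFDerivAt f (fderiv ℝ f p) (φ (F p) 0) := by
      rw [hψ0]; exact hf.hasFDerivAt
    exact h1.comp 0 hψ.hasFDerivAt
  have hzero : HasFDerivAt (fun y => f (φ (F p) y))
      (0 : (LinearMap.ker (F' : E n →ₗ[ℝ] ℝ)) →L[ℝ] ℝ) 0 := by
    have hconst : HasFDerivAt (fun _ : LinearMap.ker (F' : E n →ₗ[ℝ] ℝ) => (0 : ℝ))
        (0 : (LinearMap.ker (F' : E n →ₗ[ℝ] ℝ)) →L[ℝ] ℝ) 0 := hasFDerivAt_const (0:ℝ) 0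
    have heq : (fun y => f (φ (F p) y)) =ᶠ[nhds (0 : LinearMap.ker (F' : E n →ₗ[ℝ] ℝ))] fun _ => (0:ℝ) := hfz
    exact hconst.congr_of_eventuallyEq heq
  have hC0 : (fderiv ℝ f p).comp (LinearMap.ker (F' : E n →ₗ[ℝ] ℝ)).subtypeL = 0 := hcomp.unique hzero
  have hvk : v ∈ LinearMap.ker (F' : E n →ₗ[ℝ] ℝ) := by
    rw [LinearMap.mem_ker]
    exact (htan p hpMV v).2 hv
  have := congrArg (fun (L : LinearMap.ker (F' : E n →ₗ[ℝ] ℝ) →L[ℝ] ℝ) => L ⟨v, hvk⟩) hC0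
  simpa using this

open Filter in
/-- Symmetry of the second fundamental form on tangent vectors. -/
lemma sff_symm {M : Set (E n)} {ν : E n → E n}
    (hsurf : IsHypersurface M ν) {p : E n} (hp : p ∈ M)
    {u v : E n} (hu : u ∈ tangAt ν p) (hv : v ∈ tangAt ν p) :
    rI (fderiv ℝ ν p u) v = rI (fderiv ℝ ν p v) u := by
  obtain ⟨hν, hnorm, hloc⟩ := hsurf
  obtain ⟨V, F, hVo, hpV, hFs, hMV, htan⟩ := hloc p hp
  have hpMV : p ∈ M ∩ V := ⟨hp, hpV⟩
  have hFc : ContDiffAt ℝ (⊤ : ℕ∞) F p := hFs.contDiffAt (hVo.mem_nhds hpV)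
  have hGc : ContDiffAt ℝ 1 (fderiv ℝ F) p :=
    hFc.fderiv_right (by exact_mod_cast ENat.natCast_le_of_coe_top_le_withTop le_rfl 2)
  have hGd : DifferentiableAt ℝ (fderiv ℝ F) p := hGc.differentiableAt one_ne_zero
  have hνd : DifferentiableAt ℝ ν p :=
    ((hν.differentiable (by simp))).differentiableAt
  have hν1 : rI (ν p) (ν p) = 1 := rI_self_one (hnorm p hp)
  have hc : fderiv ℝ F p (ν p) ≠ 0 := by
    intro h
    have h0 : rI (ν p) (ν p) = 0 := (htan p hpMV (ν p)).1 h
    rw [h0] at hν1; norm_num at hν1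
  have key : ∀ z ∈ M ∩ V, ∀ w : E n,
      fderiv ℝ F z w = fderiv ℝ F z (ν z) * rI (ν z) w := by
    intro z hz w
    have hz1 : rI (ν z) (ν z) = 1 := rI_self_one (hnorm z hz.1)
    have htang : (w - rI (ν z) w • ν z) ∈ tangAt ν z := by
      show rI (ν z) (w - rI (ν z) w • ν z) = 0
      rw [rI_sub_right, rI_smul_right, hz1]; ring
    have h0 : fderiv ℝ F z (w - rI (ν z) w • ν z) = 0 := (htan z hz _).2 htang
    rw [map_sub, map_smul] at h0
    simp only [smul_eq_mul] at h0
    linarith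
  -- the `u,v` derivative identity
  have main : ∀ s t : E n, s ∈ tangAt ν p → t ∈ tangAt ν p →
      fderiv ℝ (fderiv ℝ F) p s t = fderiv ℝ F p (ν p) * rI (fderiv ℝ ν p s) t := by
    intro s t hs ht
    have d1 : DifferentiableAt ℝ (fun z => fderiv ℝ F z t) p :=
      hGd.clm_apply (differentiableAt_const t)
    have d2 : DifferentiableAt ℝ (fun z => fderiv ℝ F z (ν z)) p := hGd.clm_apply hνd
    have d3 : DifferentiableAt ℝ (fun z => rI (ν z) t) p :=
      diff_rI hνd (differentiableAt_const t)
    have dΦ : DifferentiableAt ℝ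
        (fun z => fderiv ℝ F z t - fderiv ℝ F z (ν z) * rI (ν z) t) p :=
      d1.sub (d2.mul d3)
    have hΦ0 : ∀ᶠ z in nhds p, z ∈ M →
        fderiv ℝ F z t - fderiv ℝ F z (ν z) * rI (ν z) t = 0 := by
      filter_upwards [hVo.mem_nhds hpV] with z hzV hzM
      rw [key z ⟨hzM, hzV⟩ t]; ring
    have e0 : fderiv ℝ (fun z => fderiv ℝ F z t - fderiv ℝ F z (ν z) * rI (ν z) t) p s = 0 :=
      tangent_fderiv ⟨hν, hnorm, hloc⟩ hp dΦ hΦ0 hs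
    have h1 : fderiv ℝ (fun z => fderiv ℝ F z t) p s = fderiv ℝ (fderiv ℝ F) p s t := by
      rw [fderiv_clm_apply hGd (differentiableAt_const t)]
      simp
    have h3 : fderiv ℝ (fun z => rI (ν z) t) p s = rI (fderiv ℝ ν p s) t := by
      rw [fderiv_rI hνd (differentiableAt_const t) s, fderiv_fun_const]
      simp [rI_zero_right]
    have hsplit : fderiv ℝ (fun z => fderiv ℝ F z t - fderiv ℝ F z (ν z) * rI (ν z) t) p
        = fderiv ℝ (fun z => fderiv ℝ F z t) p
          - ((fderiv ℝ F p (ν p)) • fderiv ℝ (fun z => rI (ν z) t) p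
             + (rI (ν p) t) • fderiv ℝ (fun z => fderiv ℝ F z (ν z)) p) := by
      rw [fderiv_fun_sub d1 (d2.fun_mul d3), fderiv_fun_mul d2 d3]
    rw [hsplit] at e0
    have ht0 : rI (ν p) t = 0 := ht
    simp only [ContinuousLinearMap.sub_apply, ContinuousLinearMap.add_apply,
      ContinuousLinearMap.smul_apply, smul_eq_mul, ht0, zero_mul, add_zero, h1, h3] at e0
    linarith
  have hsym : fderiv ℝ (fderiv ℝ F) p u v = fderiv ℝ (fderiv ℝ F) p v u :=
    (hFc.isSymmSndFDerivAt (by rw [minSmoothness_of_isRCLikeNormedField]; exact_mod_cast ENat.natCast_le_of_coe_top_le_withTop le_rfl 2)) u v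
  have e1 := main u v hu hv
  have e2 := main v u hv hu
  rw [e1, e2] at hsym
  exact mul_left_cancel₀ hc hsym

lemma orth_tang {ν : E n → E n} {p : E n} {x : E n}
    (h : (inner ℂ (ν p) x : ℂ) = 0) : x ∈ tangAt ν p ∧ J x ∈ tangAt ν p := by
  constructor
  · show rI (ν p) x = 0
    simp [rI, h]
  · show rI (ν p) (J x) = 0
    simp [rI, J, inner_smul_right, h]

open Filter in
/-- Differentiating the orthogonality relations along tangent directions. -/
lemma orth_facts {M : Set (E n)} {ν : E n → E n}
    (hsurf : IsHypersurface M ν) {p : E n} (hp : p ∈ M)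
    {X : E n → E n} (hXs : ContDiff ℝ (⊤ : ℕ∞) X)
    (ho : ∀ z ∈ M, (inner ℂ (ν z) (X z) : ℂ) = 0)
    {u : E n} (hu : u ∈ tangAt ν p) :
    rI (fderiv ℝ X p u) (J (ν p)) = rI (fderiv ℝ ν p u) (J (X p)) ∧
    rI (fderiv ℝ X p u) (ν p) = - rI (fderiv ℝ ν p u) (X p) := by
  have hνd : DifferentiableAt ℝ ν p :=
    ((hsurf.1.differentiable (by simp))).differentiableAt
  have hXd : DifferentiableAt ℝ X p :=
    ((hXs.differentiable (by simp))).differentiableAt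
  have hJXd : DifferentiableAt ℝ (fun z => J (X z)) p := by
    have : (fun z => J (X z)) = fun z => JL n (X z) := rfl
    rw [this]
    exact ((JL n).differentiableAt).comp p hXd
  have e1 : fderiv ℝ (fun z => rI (ν z) (X z)) p u = 0 := by
    apply tangent_fderiv hsurf hp (diff_rI hνd hXd) _ hu
    filter_upwards with z hz
    simp [rI, ho z hz]
  have e2 : fderiv ℝ (fun z => rI (ν z) (J (X z))) p u = 0 := by
    apply tangent_fderiv hsurf hp (diff_rI hνd hJXd) _ hu
    filter_upwards with z hz
    simp [rI, J, inner_smul_right, ho z hz]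
  rw [fderiv_rI hνd hXd u] at e1
  rw [fderiv_rI hνd hJXd u, fderiv_J hXd] at e2
  constructor
  · have : rI (ν p) ((JL n).comp (fderiv ℝ X p) u) = rI (ν p) (J (fderiv ℝ X p u)) := rfl
    rw [this] at e2
    have h2 : rI (J (fderiv ℝ X p u)) (ν p) = - rI (fderiv ℝ X p u) (J (ν p)) :=
      rI_J_left _ _
    rw [rI_symm (ν p) (J (fderiv ℝ X p u)), h2] at e2
    linarith
  · rw [rI_symm (ν p) (fderiv ℝ X p u)] at e1
    linarith

end Aux

theorem stmt4 {n : ℕ} (M : Set (E n)) (ν : E n → E n)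
    (hsurf : IsHypersurface M ν)
    (Z W : E n → CV n) (hZ : IsHoloField M ν Z) (hW : IsHoloField M ν W) :
    ∀ p ∈ M, gC (bracket Z (conjF W) p) (TF ν p)
      = -(2 * Complex.I) * hC ν p (Z p) (conjCV (W p)) := by
  intro p hp
  obtain ⟨hZs, hZ2, hZo⟩ := hZ
  obtain ⟨hWs, hW2, hWo⟩ := hW
  have hνd : DifferentiableAt ℝ ν p :=
    ((hsurf.1.differentiable (by simp))).differentiableAt
  have hXd : DifferentiableAt ℝ (fun z => (Z z).1) p :=
    ((hZs.differentiable (by simp))).differentiableAt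
  have hYd : DifferentiableAt ℝ (fun z => (W z).1) p :=
    ((hWs.differentiable (by simp))).differentiableAt
  set a : E n := (Z p).1 with ha
  set b : E n := (W p).1 with hb
  set N : E n := ν p with hN
  set Xd : E n →L[ℝ] E n := fderiv ℝ (fun z => (Z z).1) p with hXdd
  set Yd : E n →L[ℝ] E n := fderiv ℝ (fun z => (W z).1) p with hYdd
  set νd : E n →L[ℝ] E n := fderiv ℝ ν p with hνdd
  -- tangency of a, J a, b, J b
  obtain ⟨ta, tJa⟩ := orth_tang (hZo p hp)
  obtain ⟨tb, tJb⟩ := orth_tang (hWo p hp)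
  -- derivative identities
  obtain ⟨Xa1, Xa2⟩ := orth_facts hsurf hp hZs hZo ta
  obtain ⟨XJa1, XJa2⟩ := orth_facts hsurf hp hZs hZo tJa
  obtain ⟨Xb1, Xb2⟩ := orth_facts hsurf hp hZs hZo tb
  obtain ⟨XJb1, XJb2⟩ := orth_facts hsurf hp hZs hZo tJb
  obtain ⟨Ya1, Ya2⟩ := orth_facts hsurf hp hWs hWo ta
  obtain ⟨YJa1, YJa2⟩ := orth_facts hsurf hp hWs hWo tJa
  obtain ⟨Yb1, Yb2⟩ := orth_facts hsurf hp hWs hWo tb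
  obtain ⟨YJb1, YJb2⟩ := orth_facts hsurf hp hWs hWo tJb
  -- symmetry identities
  have s1 : rI (νd a) (J b) = rI (νd (J b)) a := sff_symm hsurf hp ta tJb
  have s2 : rI (νd (J a)) b = rI (νd b) (J a) := sff_symm hsurf hp tJa tb
  have s3 : rI (νd a) b = rI (νd b) a := sff_symm hsurf hp ta tb
  have s4 : rI (νd (J a)) (J b) = rI (νd (J b)) (J a) := sff_symm hsurf hp tJa tJb
  -- derivatives of the second components
  have hZp2 : (Z p).2 = -(J a) := hZ2 p
  have hWb2 : (conjF W p).2 = J b := by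
    show -(W p).2 = J b
    rw [hW2 p, neg_neg]
  have ec1 : (fun z => (conjF W z).1) = (fun z => (W z).1) := rfl
  have ec2 : (fun z => (conjF W z).2) = fun z => J ((W z).1) := by
    funext z
    show -(W z).2 = J ((W z).1)
    rw [hW2 z, neg_neg]
  have ez2 : (fun z => (Z z).2) = fun z => -(J ((Z z).1)) := by
    funext z
    rw [hZ2 z]
  have hJXd : DifferentiableAt ℝ (fun z => J ((Z z).1)) p := by
    have : (fun z => J ((Z z).1)) = fun z => JL n ((Z z).1) := rfl
    rw [this]
    exact ((JL n).differentiableAt).comp p hXd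
  have hf2 : fderiv ℝ (fun z => (conjF W z).2) p = (JL n).comp Yd := by
    rw [ec2]; exact fderiv_J hYd
  have hf4 : fderiv ℝ (fun z => (Z z).2) p = -((JL n).comp Xd) := by
    rw [ez2, fderiv_fun_neg, fderiv_J hXd]
  -- the bracket components
  have hb1 : (bracket Z (conjF W) p).1
      = (Yd a + J (Yd (J a))) - (Xd b + J (Xd (J b))) := by
    show (DD (conjF W) (Z p) p - DD Z (conjF W p) p).1 = _
    rw [Prod.fst_sub]
    show (fderiv ℝ (fun z => (conjF W z).1) p (Z p).1
        - fderiv ℝ (fun z => (conjF W z).2) p (Z p).2)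
      - (fderiv ℝ (fun z => (Z z).1) p (conjF W p).1
        - fderiv ℝ (fun z => (Z z).2) p (conjF W p).2) = _
    rw [ec1, hf2, hf4, hZp2, hWb2, ← hXdd, ← hYdd]
    show (Yd a - J (Yd (-(J a)))) - (Xd b - (-(J (Xd (J b))))) = _
    rw [map_neg]
    show (Yd a - (JL n) (-(Yd (J a)))) - (Xd b - (-(J (Xd (J b))))) = _
    rw [map_neg]
    show (Yd a - (-(J (Yd (J a))))) - (Xd b - (-(J (Xd (J b))))) = _
    abel
  have hb2 : (bracket Z (conjF W) p).2
      = (-(Yd (J a)) + J (Yd a)) - (Xd (J b) - J (Xd b)) := by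
    show (DD (conjF W) (Z p) p - DD Z (conjF W p) p).2 = _
    rw [Prod.snd_sub]
    show (fderiv ℝ (fun z => (conjF W z).1) p (Z p).2
        + fderiv ℝ (fun z => (conjF W z).2) p (Z p).1)
      - (fderiv ℝ (fun z => (Z z).1) p (conjF W p).2
        + fderiv ℝ (fun z => (Z z).2) p (conjF W p).1) = _
    rw [ec1, hf2, hf4, hZp2, hWb2, ← hXdd, ← hYdd]
    show (Yd (-(J a)) + J (Yd a)) - (Xd (J b) + (-(J (Xd b)))) = _
    rw [map_neg]
    abel
  -- real and imaginary parts of the left-hand side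
  have R1 : rI ((Yd a + J (Yd (J a))) - (Xd b + J (Xd (J b)))) (J N)
      = 2 * (rI a (νd (J b)) - rI (J a) (νd b)) := by
    rw [rI_sub_left, rI_add_left, rI_add_left, rI_J_J, rI_J_J,
      Ya1, YJa2, Xb1, XJb2]
    rw [rI_symm a (νd (J b)), rI_symm (J a) (νd b)]
    rw [s1, s2]
    ring
  have R2 : rI ((-(Yd (J a)) + J (Yd a)) - (Xd (J b) - J (Xd b))) (J N)
      = -2 * (rI a (νd b) + rI (J a) (νd (J b))) := by
    rw [rI_sub_left, rI_add_left, rI_sub_left, rI_neg_left, rI_J_J, rI_J_J,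
      YJa1, Ya2, XJb1, Xb2]
    rw [rI_symm a (νd b), rI_symm (J a) (νd (J b))]
    rw [s3, s4]
    ring
  -- assemble
  have hLHS : gC (bracket Z (conjF W) p) (TF ν p)
      = ((rI ((bracket Z (conjF W) p).1) (J N) : ℝ) : ℂ)
        + ((rI ((bracket Z (conjF W) p).2) (J N) : ℝ) : ℂ) * Complex.I := by
    show ((rI ((bracket Z (conjF W) p).1) (J N)
          - rI ((bracket Z (conjF W) p).2) 0 : ℝ) : ℂ)
        + ((rI ((bracket Z (conjF W) p).1) 0
          + rI ((bracket Z (conjF W) p).2) (J N) : ℝ) : ℂ) * Complex.I = _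
    rw [rI_zero_right, rI_zero_right]
    norm_num
  have hRHS : hC ν p (Z p) (conjCV (W p))
      = ((rI a (νd b) + rI (J a) (νd (J b)) : ℝ) : ℂ)
        + ((rI a (νd (J b)) - rI (J a) (νd b) : ℝ) : ℂ) * Complex.I := by
    have hcW2 : (conjCV (W p)).2 = J b := hWb2
    have hcW1 : (conjCV (W p)).1 = b := rfl
    show ((rI (Z p).1 (νd ((conjCV (W p)).1)) - rI (Z p).2 (νd ((conjCV (W p)).2)) : ℝ) : ℂ)
        + ((rI (Z p).1 (νd ((conjCV (W p)).2)) + rI (Z p).2 (νd ((conjCV (W p)).1)) : ℝ) : ℂ)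
          * Complex.I = _
    rw [hcW1, hcW2, hZp2, rI_neg_left, rI_neg_left, ← ha]
    push_cast
    ring
  rw [hLHS, hRHS, hb1, hb2, R1, R2]
  push_cast
  ring_nf
  rw [Complex.I_sq]
  ring
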